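/- Let G be a finite simple graph with total domination number γ_t(G) ≥ 3. If there exists a minimum total dominating set D of G containing three vertices x, y, z such that xy is an edge of G and the distance from z to the set {x,y} is at most 2, then G can be transformed into a graph H with γ_t(H) = γ_t(G) − 1 using at most 2 edge contractions. -/
import Mathlib


open SimpleGraph

/-- `D` is a total dominating set of `G`: every vertex has a neighbour in `D`. -/
def IsTotalDomSet {V : Type*} (G : SimpleGraph V) (D : Set V) : Prop :=
  ∀ v : V, ∃ u ∈ D, G.Adj u v

/-- `x` and `y` are (distinct or not) at distance at most two:
adjacent or joined through a common neighbour. -/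
def WithinTwo {V : Type*} (G : SimpleGraph V) (x y : V) : Prop :=
  G.Adj x y ∨ ∃ z, G.Adj x z ∧ G.Adj z y

/-- `x` and `y` are at distance exactly two. -/
def DistTwo {V : Type*} (G : SimpleGraph V) (x y : V) : Prop :=
  x ≠ y ∧ ¬ G.Adj x y ∧ ∃ z, G.Adj x z ∧ G.Adj z y

/-- `D` is a semitotal dominating set of `G`: a dominating set in which every
vertex of `D` has another vertex of `D` within distance two (a witness). -/
def IsSemitotalDomSet {V : Type*} (G : SimpleGraph V) (D : Set V) : Prop :=
  (∀ v : V, v ∉ D → ∃ u ∈ D, G.Adj u v) ∧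
  (∀ x ∈ D, ∃ y ∈ D, y ≠ x ∧ WithinTwo G x y)

/-- The total domination number `γ_t`. -/
noncomputable def totalDomNum {V : Type*} (G : SimpleGraph V) [Fintype V] : ℕ :=
  sInf {n | ∃ D : Set V, IsTotalDomSet G D ∧ D.ncard = n}

/-- The semitotal domination number `γ_{t2}`. -/
noncomputable def semitotalDomNum {V : Type*} (G : SimpleGraph V) [Fintype V] : ℕ :=
  sInf {n | ∃ D : Set V, IsSemitotalDomSet G D ∧ D.ncard = n}

/-- The graph obtained from `G` by contracting the edge `xy`:
delete `y` and merge it into `x`. -/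
def contractEdge {V : Type*} (G : SimpleGraph V) (x y : V) :
    SimpleGraph {v : V // v ≠ y} :=
  SimpleGraph.fromRel (fun a b =>
    G.Adj a.1 b.1 ∨ (a.1 = x ∧ G.Adj y b.1) ∨ (b.1 = x ∧ G.Adj y a.1))

/-- A bundled finite simple graph. -/
structure FGraph : Type 1 where
  V : Type
  fin : Fintype V
  G : SimpleGraph V

attribute [instance] FGraph.fin

noncomputable def FGraph.tdn (A : FGraph) : ℕ := totalDomNum A.G

noncomputable def FGraph.stdn (A : FGraph) : ℕ := semitotalDomNum A.G

/-- `B` is obtained from `A` by contracting a single edge. -/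
def FGraph.Contract (A B : FGraph) : Prop :=
  ∃ x y : A.V, A.G.Adj x y ∧ ∃ e : B.V ≃ {v : A.V // v ≠ y},
    ∀ a b : B.V, B.G.Adj a b ↔ (contractEdge A.G x y).Adj (e a) (e b)

/-- `B` is obtained from `A` by a sequence of `n` edge contractions. -/
inductive ContractStar : ℕ → FGraph → FGraph → Prop
  | refl (A : FGraph) : ContractStar 0 A A
  | step {n : ℕ} {A B C : FGraph} : A.Contract B → ContractStar n B C →
      ContractStar (n + 1) A C

/-- At most `k` edge contractions suffice to decrease the total domination number by one. -/
def ctTDLe (A : FGraph) (k : ℕ) : Prop :=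
  ∃ n ≤ k, ∃ B : FGraph, ContractStar n A B ∧ B.tdn = A.tdn - 1

/-- At most `k` edge contractions suffice to decrease the semitotal domination number by one. -/
def ctSTLe (A : FGraph) (k : ℕ) : Prop :=
  ∃ n ≤ k, ∃ B : FGraph, ContractStar n A B ∧ B.stdn = A.stdn - 1

/-- `ct_{γ_t}`: the minimum number of edge contractions needed to decrease `γ_t` by one. -/
noncomputable def ctTDNum (A : FGraph) : ℕ :=
  sInf {n | ∃ B : FGraph, ContractStar n A B ∧ B.tdn = A.tdn - 1}

/-- `ct_{γ_{t2}}`: the minimum number of edge contractions needed to decrease `γ_{t2}` by one. -/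
noncomputable def ctSTNum (A : FGraph) : ℕ :=
  sInf {n | ∃ B : FGraph, ContractStar n A B ∧ B.stdn = A.stdn - 1}

/-- Disjoint union of two simple graphs. -/
def disjGraphUnion {α β : Type*} (G : SimpleGraph α) (H : SimpleGraph β) :
    SimpleGraph (α ⊕ β) :=
  SimpleGraph.fromRel (fun a b =>
    match a, b with
    | Sum.inl a, Sum.inl b => G.Adj a b
    | Sum.inr a, Sum.inr b => H.Adj a b
    | _, _ => False)

section MyAux

private lemma fg_tdn_le (B : FGraph) {D : Set B.V} (hD : IsTotalDomSet B.G D) :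
    B.tdn ≤ D.ncard :=
  Nat.sInf_le ⟨D, hD, rfl⟩

private lemma fg_exists_min (B : FGraph) (h : ∃ D : Set B.V, IsTotalDomSet B.G D) :
    ∃ D : Set B.V, IsTotalDomSet B.G D ∧ D.ncard = B.tdn := by
  obtain ⟨D, hD⟩ := h
  have hne : {n | ∃ D : Set B.V, IsTotalDomSet B.G D ∧ D.ncard = n}.Nonempty :=
    ⟨D.ncard, D, hD, rfl⟩
  exact Nat.sInf_mem hne

private lemma contract_adj {V : Type} (G : SimpleGraph V) (x y : V)
    {u v : {v : V // v ≠ y}} (hne : u ≠ v)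
    (h : G.Adj u.1 v.1 ∨ (u.1 = x ∧ G.Adj y v.1) ∨ (v.1 = x ∧ G.Adj y u.1)) :
    (contractEdge G x y).Adj u v := by
  rw [contractEdge, SimpleGraph.fromRel_adj]
  exact ⟨hne, Or.inl h⟩

private lemma contract_adj' {V : Type} (G : SimpleGraph V) (x y : V)
    {u v : {v : V // v ≠ y}} (h : (contractEdge G x y).Adj u v) :
    G.Adj u.1 v.1 ∨ (u.1 = x ∧ G.Adj y v.1) ∨ (v.1 = x ∧ G.Adj y u.1) := by
  rw [contractEdge, SimpleGraph.fromRel_adj] at h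
  obtain ⟨hne, h | h⟩ := h
  · exact h
  · rcases h with h | h | h
    · exact Or.inl h.symm
    · exact Or.inr (Or.inr h)
    · exact Or.inr (Or.inl h)

/-- From a total dominating set of a contracted graph, one can build a total
dominating set of the original graph with at most one more vertex. -/
private lemma contract_ge {V : Type} (G : SimpleGraph V) {x y : V} (hxy : G.Adj x y)
    {D' : Set {v : V // v ≠ y}} (hD' : IsTotalDomSet (contractEdge G x y) D') :
    ∃ E : Set V, IsTotalDomSet G E ∧ E.ncard ≤ D'.ncard + 1 := by
  classical
  set S : Set V := Subtype.val '' D' with hS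
  have hScard : S.ncard = D'.ncard := Set.ncard_image_of_injective _ Subtype.val_injective
  have hxval : (x : V) ≠ y := hxy.ne
  by_cases hxD : (⟨x, hxval⟩ : {v : V // v ≠ y}) ∈ D'
  · refine ⟨insert y S, ?_, ?_⟩
    · intro v
      by_cases hvy : v = y
      · subst hvy
        exact ⟨x, Or.inr ⟨⟨x, hxval⟩, hxD, rfl⟩, hxy⟩
      · obtain ⟨u, huD, hu⟩ := hD' ⟨v, hvy⟩
        rcases contract_adj' G x y hu with h | ⟨hux, h⟩ | ⟨hvx, h⟩
        · exact ⟨u.1, Or.inr ⟨u, huD, rfl⟩, h⟩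
        · exact ⟨y, Or.inl rfl, h⟩
        · exact ⟨y, Or.inl rfl, by rw [show v = x from hvx]; exact hxy.symm⟩
    · calc (insert y S).ncard ≤ S.ncard + 1 := Set.ncard_insert_le _ _
        _ = D'.ncard + 1 := by rw [hScard]
  · obtain ⟨u, huD, hu⟩ := hD' ⟨x, hxval⟩
    have hux : u.1 ≠ x := fun h => hxD (by rwa [show u = ⟨x, hxval⟩ from Subtype.ext h] at huD)
    have hgen : ∀ v : V, v ≠ y → v ≠ x → ∃ w ∈ S, G.Adj w v := by
      intro v hvy hvx
      obtain ⟨u', hu'D, hu'⟩ := hD' ⟨v, hvy⟩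
      rcases contract_adj' G x y hu' with h | ⟨h1, _⟩ | ⟨h1, _⟩
      · exact ⟨u'.1, ⟨u', hu'D, rfl⟩, h⟩
      · exact absurd (by rwa [show u' = ⟨x, hxval⟩ from Subtype.ext h1] at hu'D) hxD
      · exact absurd h1 hvx
    rcases contract_adj' G x y hu with h | ⟨h1, _⟩ | ⟨_, h2⟩
    · -- G.Adj u.1 x : take E = insert x S
      refine ⟨insert x S, ?_, ?_⟩
      · intro v
        by_cases hvy : v = y
        · subst hvy; exact ⟨x, Or.inl rfl, hxy⟩
        · by_cases hvx : v = x
          · subst hvx; exact ⟨u.1, Or.inr ⟨u, huD, rfl⟩, h⟩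
          · obtain ⟨w, hwS, hw⟩ := hgen v hvy hvx
            exact ⟨w, Or.inr hwS, hw⟩
      · calc (insert x S).ncard ≤ S.ncard + 1 := Set.ncard_insert_le _ _
          _ = D'.ncard + 1 := by rw [hScard]
    · exact absurd h1 hux
    · -- G.Adj y u.1 : take E = insert y S
      refine ⟨insert y S, ?_, ?_⟩
      · intro v
        by_cases hvy : v = y
        · subst hvy; exact ⟨u.1, Or.inr ⟨u, huD, rfl⟩, h2.symm⟩
        · by_cases hvx : v = x
          · subst hvx; exact ⟨y, Or.inl rfl, hxy.symm⟩
          · obtain ⟨w, hwS, hw⟩ := hgen v hvy hvx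
            exact ⟨w, Or.inr hwS, hw⟩
      · calc (insert y S).ncard ≤ S.ncard + 1 := Set.ncard_insert_le _ _
          _ = D'.ncard + 1 := by rw [hScard]

/-- One edge contraction decreases the total domination number by at most one,
provided the contracted graph has a total dominating set. -/
private lemma tdn_contract_ge (A B : FGraph) (h : A.Contract B)
    (hne : ∃ D' : Set B.V, IsTotalDomSet B.G D') : A.tdn ≤ B.tdn + 1 := by
  obtain ⟨x, y, hxy, e, he⟩ := h
  obtain ⟨D', hD', hDc⟩ := fg_exists_min B hne
  set D₂ : Set {v : A.V // v ≠ y} := e '' D' with hD₂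
  have hT₂ : IsTotalDomSet (contractEdge A.G x y) D₂ := by
    intro v
    obtain ⟨u, huD, hu⟩ := hD' (e.symm v)
    refine ⟨e u, Set.mem_image_of_mem _ huD, ?_⟩
    have h2 := (he u (e.symm v)).mp hu
    rwa [e.apply_symm_apply] at h2
  obtain ⟨E, hE, hEle⟩ := contract_ge A.G hxy hT₂
  have h1 : A.tdn ≤ E.ncard := fg_tdn_le A hE
  have h2 : D₂.ncard = B.tdn := by
    rw [hD₂, Set.ncard_image_of_injective _ e.injective, hDc]
  omega

/-- If a minimum total dominating set contains a (not necessarily induced) path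
`a - b - c`, then one contraction decreases the total domination number by one. -/
private lemma oneStep (A : FGraph) (D : Set A.V) (hT : IsTotalDomSet A.G D)
    (hcard : D.ncard = A.tdn) {a b c : A.V}
    (ha : a ∈ D) (hb : b ∈ D) (hc : c ∈ D)
    (hab : A.G.Adj a b) (hbc : A.G.Adj b c) (hac : a ≠ c) :
    ∃ B : FGraph, A.Contract B ∧ B.tdn = A.tdn - 1 := by
  classical
  set B : FGraph := ⟨{v : A.V // v ≠ a}, Fintype.ofFinite _, contractEdge A.G b a⟩ with hB
  have hcon : A.Contract B := ⟨b, a, hab.symm, Equiv.refl _, fun _ _ => Iff.rfl⟩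
  set D₀ : Set B.V := Subtype.val ⁻¹' D with hD₀
  have hTDS₀ : IsTotalDomSet B.G D₀ := by
    intro v
    obtain ⟨u, huD, huv⟩ := hT v.1
    by_cases hua : u = a
    · subst hua
      by_cases hvb : v.1 = b
      · refine ⟨⟨c, fun h => hac h.symm⟩, hc, contract_adj _ _ _ ?_ (Or.inl ?_)⟩
        · intro h
          exact hbc.ne (hvb ▸ congrArg Subtype.val h).symm
        · rw [hvb]; exact hbc.symm
      · refine ⟨⟨b, hab.ne'⟩, hb, contract_adj _ _ _ ?_ (Or.inr (Or.inl ⟨rfl, huv⟩))⟩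
        intro h
        exact hvb (congrArg Subtype.val h).symm
    · exact ⟨⟨u, hua⟩, huD,
        contract_adj _ _ _ (fun h => huv.ne (congrArg Subtype.val h)) (Or.inl huv)⟩
  have himg : Subtype.val '' D₀ = D \ {a} := by
    ext v
    simp only [hD₀, Set.mem_image, Set.mem_preimage, Set.mem_diff, Set.mem_singleton_iff]
    constructor
    · rintro ⟨⟨w, hw⟩, hwD, rfl⟩
      exact ⟨hwD, hw⟩
    · rintro ⟨hvD, hva⟩
      exact ⟨⟨v, hva⟩, hvD, rfl⟩
  have hcard₀ : D₀.ncard = A.tdn - 1 := by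
    have h1 : D₀.ncard = (D \ {a}).ncard := by
      rw [← himg, Set.ncard_image_of_injective _ Subtype.val_injective]
    rw [h1, Set.ncard_diff_singleton_of_mem ha, hcard]
  have hle : B.tdn ≤ A.tdn - 1 := hcard₀ ▸ fg_tdn_le B hTDS₀
  have hge : A.tdn ≤ B.tdn + 1 := tdn_contract_ge A B hcon ⟨D₀, hTDS₀⟩
  have hpos : 0 < A.tdn := by
    rw [← hcard]
    exact (Set.ncard_pos (Set.toFinite _)).mpr ⟨a, ha⟩
  exact ⟨B, hcon, by omega⟩

private lemma key (A : FGraph) (D : Set A.V)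
    (hT : IsTotalDomSet A.G D) (hcard : D.ncard = A.tdn)
    {x y z : A.V} (hx : x ∈ D) (hy : y ∈ D) (hz : z ∈ D)
    (hxy : A.G.Adj x y) (hzx : z ≠ x) (hzy : z ≠ y)
    (hw : WithinTwo A.G z x) : ctTDLe A 2 := by
  classical
  rcases hw with hadj | ⟨w, hzw, hwx⟩
  · obtain ⟨B, hcn, he⟩ := oneStep A D hT hcard hz hx hy hadj hxy hzy
    exact ⟨1, by norm_num, B, ContractStar.step hcn (ContractStar.refl B), he⟩
  · by_cases hwy : w = y
    · subst hwy
      obtain ⟨B, hcn, he⟩ := oneStep A D hT hcard hz hy hx hzw hxy.symm hzx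
      exact ⟨1, by norm_num, B, ContractStar.step hcn (ContractStar.refl B), he⟩
    · by_cases hwD : w ∈ D
      · obtain ⟨B, hcn, he⟩ := oneStep A D hT hcard hwD hx hy hwx hxy hwy
        exact ⟨1, by norm_num, B, ContractStar.step hcn (ContractStar.refl B), he⟩
      · -- two-step case: first contract the edge z - w
        set B₁ : FGraph := ⟨{v : A.V // v ≠ w}, Fintype.ofFinite _, contractEdge A.G z w⟩
          with hB₁
        have hc1 : A.Contract B₁ := ⟨z, w, hzw, Equiv.refl _, fun _ _ => Iff.rfl⟩
        set D₁ : Set B₁.V := Subtype.val ⁻¹' D with hD₁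
        have hT₁ : IsTotalDomSet B₁.G D₁ := by
          intro v
          obtain ⟨u, huD, huv⟩ := hT v.1
          have huw : u ≠ w := fun h => hwD (h ▸ huD)
          exact ⟨⟨u, huw⟩, huD,
            contract_adj _ _ _ (fun h => huv.ne (congrArg Subtype.val h)) (Or.inl huv)⟩
        have hc₁ : D₁.ncard = A.tdn := by
          have himg : Subtype.val '' D₁ = D := by
            ext v
            simp only [hD₁, Set.mem_image, Set.mem_preimage]
            constructor
            · rintro ⟨⟨u, hu⟩, huD, rfl⟩; exact huD
            · intro hvD
              exact ⟨⟨v, fun h => hwD (h ▸ hvD)⟩, hvD, rfl⟩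
          rw [← hcard, ← himg, Set.ncard_image_of_injective _ Subtype.val_injective]
        have hle : B₁.tdn ≤ A.tdn := hc₁ ▸ fg_tdn_le B₁ hT₁
        have hge : A.tdn ≤ B₁.tdn + 1 := tdn_contract_ge A B₁ hc1 ⟨D₁, hT₁⟩
        by_cases heq : B₁.tdn = A.tdn
        · -- D₁ is a minimum TDS of B₁ containing the path z - x - y
          have hz' : z ≠ w := hzw.ne
          have hx' : x ≠ w := hwx.ne'
          have hy' : y ≠ w := fun h => hwy h.symm
          have hzx₁ : B₁.G.Adj ⟨z, hz'⟩ ⟨x, hx'⟩ :=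
            contract_adj _ _ _ (fun h => hzx (congrArg Subtype.val h))
              (Or.inr (Or.inl ⟨rfl, hwx⟩))
          have hxy₁ : B₁.G.Adj ⟨x, hx'⟩ ⟨y, hy'⟩ :=
            contract_adj _ _ _ (fun h => hxy.ne (congrArg Subtype.val h)) (Or.inl hxy)
          have hzmem : (⟨z, hz'⟩ : B₁.V) ∈ D₁ := hz
          have hxmem : (⟨x, hx'⟩ : B₁.V) ∈ D₁ := hx
          have hymem : (⟨y, hy'⟩ : B₁.V) ∈ D₁ := hy
          obtain ⟨B₂, hc2, he2⟩ := oneStep B₁ D₁ hT₁ (by rw [hc₁, heq]) hzmem hxmem hymem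
            hzx₁ hxy₁ (fun h => hzy (congrArg Subtype.val h))
          refine ⟨2, le_refl 2, B₂,
            ContractStar.step hc1 (ContractStar.step hc2 (ContractStar.refl B₂)), ?_⟩
          rw [he2, heq]
        · have hpos : 0 < A.tdn := by
            rw [← hcard]
            exact (Set.ncard_pos (Set.toFinite _)).mpr ⟨x, hx⟩
          have heq' : B₁.tdn = A.tdn - 1 := by omega
          exact ⟨1, by norm_num, B₁, ContractStar.step hc1 (ContractStar.refl B₁), heq'⟩

end MyAux

/-- If `γ_t(G) ≥ 3` and some minimum total dominating set `D` contains vertices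
`x, y, z` with `xy ∈ E(G)` and `d(z, {x,y}) ≤ 2`, then at most two edge
contractions suffice to decrease the total domination number by one. -/
theorem stmt0 (A : FGraph) (h3 : 3 ≤ A.tdn)
    (hD : ∃ D : Set A.V, IsTotalDomSet A.G D ∧ D.ncard = A.tdn ∧
      ∃ x y z, x ∈ D ∧ y ∈ D ∧ z ∈ D ∧ A.G.Adj x y ∧ z ≠ x ∧ z ≠ y ∧
        (WithinTwo A.G z x ∨ WithinTwo A.G z y)) :
    ctTDLe A 2 := by
  obtain ⟨D, hT, hcard, x, y, z, hx, hy, hz, hxy, hzx, hzy, hw | hw⟩ := hD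
  · exact key A D hT hcard hx hy hz hxy hzx hzy hw
  · exact key A D hT hcard hy hx hz hxy.symm hzy hzx hw
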